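/- Let u₀, u₁ be holomorphic near 0 with u₀(0) ≠ 0, u₁(0) ≠ 0, set a = u₀(0)/u₁(0), v₀(z) = z^m u₀(z), v₁(z) = u₁(z), and √h(z) = (v₀(z) − v₁(z))/2. Suppose g₊(z) = 1 + z^m + O(|z|^{m+1}) and g₋(z) = a·z^m + O(|z|^{m+1}). Then μ(z) = √h(z)·(g₊(z) + g₋(z))/(g₊(z) − g₋(z)) satisfies μ(z) = −(u₀(z)·z^m + u₁(z))/2 + O(|z|^{m+1}) as z → 0. -/

import Mathlib

open Filter Asymptotics Complex Topology

/-- Asymptotics of `μ` at a point of `E_∞`: with `v₀ z = z^m u₀ z`, `v₁ z = u₁ z`,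
`√h z = (v₀ z - v₁ z)/2`, `a = u₀ 0 / u₁ 0`, and jets
`g₊ z = 1 + z^m + O(z^{m+1})`, `g₋ z = a z^m + O(z^{m+1})`, the function
`μ z = √h z (g₊ z + g₋ z)/(g₊ z - g₋ z)` satisfies
`μ z = -(u₀ z z^m + u₁ z)/2 + O(z^{m+1})` as `z → 0`. -/
theorem mu_asymptotics_at_infinity_point
    (u₀ u₁ gp gm : ℂ → ℂ) (m : ℕ) (hm : 1 ≤ m)
    (hu₀ : AnalyticAt ℂ u₀ 0) (hu₁ : AnalyticAt ℂ u₁ 0)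
    (hu₀0 : u₀ 0 ≠ 0) (hu₁0 : u₁ 0 ≠ 0)
    (hgp : (fun z => gp z - (1 + z ^ m)) =O[nhdsWithin (0 : ℂ) {(0 : ℂ)}ᶜ]
      fun z => z ^ (m + 1))
    (hgm : (fun z => gm z - (u₀ 0 / u₁ 0) * z ^ m) =O[nhdsWithin (0 : ℂ) {(0 : ℂ)}ᶜ]
      fun z => z ^ (m + 1)) :
    (fun z => (z ^ m * u₀ z - u₁ z) / 2 * (gp z + gm z) / (gp z - gm z) -
        (-(u₀ z * z ^ m + u₁ z) / 2))
      =O[nhdsWithin (0 : ℂ) {(0 : ℂ)}ᶜ] fun z => z ^ (m + 1) := by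
  set l := nhdsWithin (0 : ℂ) {(0 : ℂ)}ᶜ with hl
  set a := u₀ 0 / u₁ 0 with ha
  have hm0 : m ≠ 0 := by omega
  have hle : l ≤ 𝓝 (0 : ℂ) := nhdsWithin_le_nhds
  have hzpow : Tendsto (fun z : ℂ => z ^ (m + 1)) l (𝓝 0) := by
    have h := (continuous_pow (m + 1)).tendsto (0 : ℂ)
    simpa [zero_pow] using h.mono_left hle
  -- gp → 1
  have hgp1 : Tendsto gp l (𝓝 1) := by
    have h1 : Tendsto (fun z => gp z - (1 + z ^ m)) l (𝓝 0) :=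
      hgp.trans_tendsto hzpow
    have h2 : Tendsto (fun z : ℂ => 1 + z ^ m) l (𝓝 1) := by
      have h := ((continuous_const (y := (1:ℂ))).add (continuous_pow m)).tendsto (0 : ℂ)
      simpa [zero_pow hm0, Pi.add_def] using h.mono_left hle
    have := h1.add h2
    simpa using this
  -- gm → 0
  have hgm0 : Tendsto gm l (𝓝 0) := by
    have h1 : Tendsto (fun z => gm z - a * z ^ m) l (𝓝 0) :=
      hgm.trans_tendsto hzpow
    have h2 : Tendsto (fun z : ℂ => a * z ^ m) l (𝓝 0) := by
      have h := ((continuous_const (y := a)).mul (continuous_pow m)).tendsto (0 : ℂ)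
      simpa [zero_pow hm0, Pi.mul_def] using h.mono_left hle
    have := h1.add h2
    simpa using this
  -- D := gp - gm → 1
  have hD : Tendsto (fun z => gp z - gm z) l (𝓝 1) := by
    have := hgp1.sub hgm0
    simpa using this
  have hDne : ∀ᶠ z in l, gp z - gm z ≠ 0 :=
    hD.eventually_ne one_ne_zero
  have hDinv : (fun z => (gp z - gm z)⁻¹) =O[l] (fun _ => (1 : ℂ)) := by
    have : Tendsto (fun z => (gp z - gm z)⁻¹) l (𝓝 1⁻¹) := hD.inv₀ one_ne_zero
    exact this.isBigO_one ℂ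
  -- the numerator N z = z^m u₀ z * gp z - u₁ z * gm z is O(z^{m+1})
  have hu₀O : (fun z : ℂ => u₀ z) =O[l] (fun _ => (1 : ℂ)) :=
    ((hu₀.continuousAt.tendsto).mono_left hle).isBigO_one ℂ
  have hu₁O : (fun z : ℂ => u₁ z) =O[l] (fun _ => (1 : ℂ)) :=
    ((hu₁.continuousAt.tendsto).mono_left hle).isBigO_one ℂ
  have hzm : (fun z : ℂ => z ^ m) =O[l] (fun _ => (1 : ℂ)) := by
    have h : Tendsto (fun z : ℂ => z ^ m) l (𝓝 0) := by
      have h := (continuous_pow m).tendsto (0 : ℂ)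
      simpa [zero_pow hm0] using h.mono_left hle
    exact h.isBigO_one ℂ
  have hT1 : (fun z : ℂ => z ^ m * u₀ z * (gp z - (1 + z ^ m))) =O[l]
      fun z => z ^ (m + 1) := by
    have := ((hzm.mul hu₀O).mul hgp)
    simpa using this
  have hT2 : (fun z : ℂ => u₁ z * (gm z - a * z ^ m)) =O[l]
      fun z => z ^ (m + 1) := by
    have := hu₁O.mul hgm
    simpa using this
  have hT3 : (fun z : ℂ => z ^ m * (u₀ z - a * u₁ z)) =O[l]
      fun z => z ^ (m + 1) := by
    have hdiff : (fun z : ℂ => u₀ z - a * u₁ z) =O[l] (fun z : ℂ => z) := by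
      have hAn : AnalyticAt ℂ (fun z => u₀ z - a * u₁ z) 0 :=
        hu₀.sub ((analyticAt_const).mul hu₁)
      have hdz : DifferentiableAt ℂ (fun z => u₀ z - a * u₁ z) 0 :=
        hAn.differentiableAt
      have h0 : u₀ 0 - a * u₁ 0 = 0 := by
        rw [ha, div_mul_cancel₀ _ hu₁0, sub_self]
      have := hdz.isBigO_sub
      simp only [sub_zero, h0] at this
      exact this.mono hle
    have hzmref : (fun z : ℂ => z ^ m) =O[l] (fun z : ℂ => z ^ m) :=
      isBigO_refl _ _
    have := hzmref.mul hdiff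
    simpa [pow_succ] using this
  have hT4 : (fun z : ℂ => z ^ (2 * m) * u₀ z) =O[l] fun z => z ^ (m + 1) := by
    have hz2m : (fun z : ℂ => z ^ (2 * m)) =O[l] fun z => z ^ (m + 1) := by
      have h : (fun z : ℂ => z ^ (2 * m)) =O[𝓝 (0 : ℂ)] fun z => z ^ (m + 1) := by
        have : ∀ z : ℂ, z ^ (2 * m) = z ^ (m + 1) * z ^ (2 * m - (m + 1)) := by
          intro z
          rw [← pow_add]
          congr 1
          omega
        simp only [this]
        have hb : (fun z : ℂ => z ^ (2 * m - (m + 1))) =O[𝓝 (0 : ℂ)]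
            (fun _ => (1 : ℂ)) :=
          ((continuous_pow _).tendsto (0 : ℂ)).isBigO_one ℂ
        simpa using (isBigO_refl (fun z : ℂ => z ^ (m + 1)) (𝓝 0)).mul hb
      exact h.mono hle
    simpa using hz2m.mul hu₀O
  have hN : (fun z : ℂ => z ^ m * u₀ z * gp z - u₁ z * gm z) =O[l]
      fun z => z ^ (m + 1) := by
    have heq : (fun z : ℂ => z ^ m * u₀ z * gp z - u₁ z * gm z) =
        fun z => z ^ m * u₀ z * (gp z - (1 + z ^ m)) - u₁ z * (gm z - a * z ^ m)
          + z ^ m * (u₀ z - a * u₁ z) + z ^ (2 * m) * u₀ z := by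
      funext z
      ring
    rw [heq]
    exact ((hT1.sub hT2).add hT3).add hT4
  -- eventual equality
  have heqv : (fun z => (z ^ m * u₀ z - u₁ z) / 2 * (gp z + gm z) / (gp z - gm z) -
        (-(u₀ z * z ^ m + u₁ z) / 2)) =ᶠ[l]
      fun z => (z ^ m * u₀ z * gp z - u₁ z * gm z) * (gp z - gm z)⁻¹ := by
    filter_upwards [hDne] with z hz
    field_simp
    ring
  have := hN.mul hDinv
  refine heqv.trans_isBigO ?_
  simpa using this
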